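/- Let X be a topological space, let d : X × X → [0,∞] be an extended pseudo-distance that is lower semicontinuous with respect to the product topology, and let m be a Borel measure on X. Let (K_i)_{i ∈ ℕ} be an increasing sequence of compact subsets of X with m(X \ ⋃_i K_i) = 0, and let ε ∈ (0,1] be such that κ_i := m({x ∈ X : d(x, K_i) < ε}) satisfies 1 ≤ κ_i < ∞ for every i. Then there exists a Borel function φ : X → [0,1] such that: (i) ∫_X φ² dm ≤ 1; (ii) φ is 1-Lipschitz with respect to d, i.e. |φ(x) − φ(y)| ≤ d(x,y) whenever d(x,y) < ∞; (iii) for every i, φ(x) ≥ 2^{−i−2}·ε/(3·√κ_i) > 0 for all x with d(x, K_i) < ε/3; in particular φ > 0 m-almost everywhere. -/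

import Mathlib

open MeasureTheory
open scoped ENNReal

lemma lsc_inf_compact {X : Type*} [TopologicalSpace X]
    (d : X → X → ℝ≥0∞) (hlsc : LowerSemicontinuous fun p : X × X => d p.1 p.2)
    {K : Set X} (hK : IsCompact K) :
    LowerSemicontinuous fun x => ⨅ y ∈ K, d x y := by
  intro x c hc
  obtain ⟨c', hcc', hc'⟩ := exists_between hc
  have hopen : IsOpen {p : X × X | c' < d p.1 p.2} :=
    lowerSemicontinuous_iff_isOpen_preimage.mp hlsc c'
  have hsub : ({x} : Set X) ×ˢ K ⊆ {p : X × X | c' < d p.1 p.2} := by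
    rintro ⟨a, b⟩ ⟨ha, hb⟩
    simp only [Set.mem_singleton_iff] at ha
    subst ha
    exact lt_of_lt_of_le hc' (iInf₂_le b hb)
  obtain ⟨u, v, hu, hv, hxu, hKv, huv⟩ :=
    generalized_tube_lemma isCompact_singleton hK hopen hsub
  filter_upwards [hu.mem_nhds (hxu rfl)] with x' hx'
  exact lt_of_lt_of_le hcc' (le_iInf₂ fun y hy => le_of_lt (huv (Set.mk_mem_prod hx' (hKv hy))))

lemma inf_triangle {X : Type*} (d : X → X → ℝ≥0∞)
    (htri : ∀ x y z, d x z ≤ d x y + d y z) (K : Set X) (x y : X) :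
    (⨅ z ∈ K, d x z) ≤ d x y + ⨅ z ∈ K, d y z := by
  rw [iInf_subtype', iInf_subtype', ENNReal.add_iInf]
  exact le_iInf fun z => le_trans (iInf_le _ z) (htri x y z)

noncomputable def cutoffD (ε : ℝ) (t : ℝ≥0∞) : ℝ :=
  max 0 (min 1 ((ε - (min t (ENNReal.ofReal ε)).toReal) * (3 / (2 * ε))))

lemma cutoffD_mem_Icc (ε : ℝ) (t : ℝ≥0∞) : cutoffD ε t ∈ Set.Icc (0 : ℝ) 1 := by
  constructor
  · exact le_max_left _ _
  · exact max_le zero_le_one (min_le_left _ _)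

lemma cutoffD_measurable (ε : ℝ) : Measurable (cutoffD ε) := by
  have h1 : Measurable fun t : ℝ≥0∞ => (min t (ENNReal.ofReal ε)).toReal :=
    (measurable_id.min measurable_const).ennreal_toReal
  exact measurable_const.max ((measurable_const.min
    (((measurable_const.sub h1)).mul_const _)))

lemma cutoffD_eq_one {ε : ℝ} (hε : 0 < ε) {t : ℝ≥0∞}
    (ht : t < ENNReal.ofReal (ε / 3)) : cutoffD ε t = 1 := by
  have h3 : ENNReal.ofReal (ε / 3) ≤ ENNReal.ofReal ε :=
    ENNReal.ofReal_le_ofReal (by linarith)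
  have hmin : min t (ENNReal.ofReal ε) = t := min_eq_left ((le_of_lt ht).trans h3)
  have htne : t ≠ ⊤ := (ht.trans_le le_top).ne
  have ht' : t.toReal < ε / 3 := by
    have := ENNReal.toReal_strict_mono (by simp) ht
    rwa [ENNReal.toReal_ofReal (by positivity)] at this
  have h1 : (1 : ℝ) ≤ (ε - (min t (ENNReal.ofReal ε)).toReal) * (3 / (2 * ε)) := by
    rw [hmin, show (ε - t.toReal) * (3 / (2 * ε)) = (ε - t.toReal) * 3 / (2 * ε) by ring,
      le_div_iff₀ (by positivity)]
    linarith
  unfold cutoffD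
  rw [min_eq_left h1, max_eq_right zero_le_one]

lemma cutoffD_eq_zero {ε : ℝ} (hε : 0 < ε) {t : ℝ≥0∞}
    (ht : ENNReal.ofReal ε ≤ t) : cutoffD ε t = 0 := by
  have hmin : min t (ENNReal.ofReal ε) = ENNReal.ofReal ε := min_eq_right ht
  unfold cutoffD
  rw [hmin, ENNReal.toReal_ofReal hε.le, sub_self, zero_mul,
    min_eq_right (le_refl 0 |>.trans zero_le_one), max_self]

lemma cutoffD_lipschitz {ε : ℝ} (hε : 0 < ε) {s t D : ℝ≥0∞} (hD : D ≠ ⊤)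
    (hst : s ≤ t + D) (hts : t ≤ s + D) :
    |cutoffD ε s - cutoffD ε t| ≤ 3 / (2 * ε) * D.toReal := by
  set E := ENNReal.ofReal ε with hE
  have hEne : E ≠ ⊤ := ENNReal.ofReal_ne_top
  have key : ∀ a b : ℝ≥0∞, a ≤ b + D →
      (min a E).toReal ≤ (min b E).toReal + D.toReal := by
    intro a b hab
    have h1 : min a E ≤ min b E + D := by
      calc min a E ≤ min (b + D) E := min_le_min hab le_rfl
        _ ≤ min (b + D) (E + D) := min_le_min le_rfl le_self_add
        _ = min b E + D := min_add_add_right b E D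
    have h2 : min b E + D ≠ ⊤ := by
      simp [ENNReal.add_ne_top, hD, ne_top_of_le_ne_top hEne (min_le_right _ _)]
    have := ENNReal.toReal_mono h2 h1
    rwa [ENNReal.toReal_add (ne_top_of_le_ne_top hEne (min_le_right _ _)) hD] at this
  have habs : |(min s E).toReal - (min t E).toReal| ≤ D.toReal := by
    rw [abs_sub_le_iff]
    constructor
    · linarith [key s t hst]
    · linarith [key t s hts]
  unfold cutoffD
  set a := (ε - (min s E).toReal) * (3 / (2 * ε))
  set b := (ε - (min t E).toReal) * (3 / (2 * ε))
  have h1 : |max 0 (min 1 a) - max 0 (min 1 b)| ≤ |min 1 a - min 1 b| := by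
    rw [max_comm 0 (min 1 a), max_comm 0 (min 1 b)]
    exact abs_max_sub_max_le_abs _ _ _
  have h2 : |min 1 a - min 1 b| ≤ |a - b| := by
    have := abs_min_sub_min_le_max (1:ℝ) a 1 b
    simpa using this
  have h3 : |a - b| ≤ 3 / (2 * ε) * D.toReal := by
    have : a - b = ((min t E).toReal - (min s E).toReal) * (3 / (2 * ε)) := by
      simp only [a, b]; ring
    rw [this, abs_mul, abs_of_nonneg (by positivity : (0:ℝ) ≤ 3 / (2 * ε)),
      abs_sub_comm, mul_comm]
    exact mul_le_mul_of_nonneg_left habs (by positivity)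
  calc |max 0 (min 1 a) - max 0 (min 1 b)| ≤ |min 1 a - min 1 b| := h1
    _ ≤ |a - b| := h2
    _ ≤ _ := h3

lemma two_zpow_eq (i : ℕ) : (2 : ℝ) ^ (-(i : ℤ) - 2) = (1 / 4) * (1 / 2) ^ i := by
  rw [sub_eq_add_neg, zpow_add₀ (two_ne_zero), zpow_neg, zpow_natCast, ← inv_pow]
  norm_num [one_div, mul_comm]

lemma summable_two_zpow : Summable fun i : ℕ => (2 : ℝ) ^ (-(i : ℤ) - 2) := by
  simp_rw [two_zpow_eq]
  exact (summable_geometric_of_lt_one (by norm_num) (by norm_num)).mul_left _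

lemma tsum_two_zpow : ∑' i : ℕ, (2 : ℝ) ^ (-(i : ℤ) - 2) = 1 / 2 := by
  simp_rw [two_zpow_eq]
  rw [tsum_mul_left, tsum_geometric_of_lt_one (by norm_num) (by norm_num)]
  norm_num


set_option maxHeartbeats 1000000 in
theorem density_construction {X : Type*} [TopologicalSpace X]
    [MeasurableSpace X] [BorelSpace X]
    (d : X → X → ℝ≥0∞)
    (hrefl : ∀ x, d x x = 0)
    (hsymm : ∀ x y, d x y = d y x)
    (htri : ∀ x y z, d x z ≤ d x y + d y z)
    (hlsc : LowerSemicontinuous fun p : X × X => d p.1 p.2)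
    (m : Measure X)
    (K : ℕ → Set X) (hKmono : Monotone K) (hKcpt : ∀ i, IsCompact (K i))
    (hKcover : m (⋃ i, K i)ᶜ = 0)
    (ε : ℝ) (hε0 : 0 < ε) (hε1 : ε ≤ 1)
    (hκ1 : ∀ i : ℕ, 1 ≤ m {x | (⨅ y ∈ K i, d x y) < ENNReal.ofReal ε})
    (hκfin : ∀ i : ℕ, m {x | (⨅ y ∈ K i, d x y) < ENNReal.ofReal ε} < ⊤) :
    ∃ φ : X → ℝ, Measurable φ ∧ (∀ x, φ x ∈ Set.Icc (0 : ℝ) 1) ∧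
      (∫⁻ x, ENNReal.ofReal (φ x ^ 2) ∂m) ≤ 1 ∧
      (∀ x y : X, d x y < ⊤ → |φ x - φ y| ≤ (d x y).toReal) ∧
      (∀ i : ℕ,
        0 < (2 : ℝ) ^ (-(i : ℤ) - 2) * ε /
            (3 * Real.sqrt (m {x | (⨅ y ∈ K i, d x y) < ENNReal.ofReal ε}).toReal) ∧
        ∀ x : X, (⨅ y ∈ K i, d x y) < ENNReal.ofReal (ε / 3) →
          (2 : ℝ) ^ (-(i : ℤ) - 2) * ε /
              (3 * Real.sqrt (m {x | (⨅ y ∈ K i, d x y) < ENNReal.ofReal ε}).toReal) ≤ φ x) ∧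
      (∀ᵐ x ∂m, 0 < φ x) := by
  classical
  set δ : ℕ → X → ℝ≥0∞ := fun i x => ⨅ y ∈ K i, d x y with hδ
  set c : ℕ → ℝ := fun i => (2 : ℝ) ^ (-(i : ℤ) - 2) * ε /
      (3 * Real.sqrt (m {x | δ i x < ENNReal.ofReal ε}).toReal) with hc
  set g : ℕ → X → ℝ := fun i x => cutoffD ε (δ i x) with hg
  set φ : X → ℝ := fun x => ∑' i, c i * g i x with hφ
  set a : ℕ → X → ℝ≥0∞ := fun i x => ENNReal.ofReal (c i * g i x) with ha
  -- basic facts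
  have hκ1' : ∀ i, 1 ≤ m {x | δ i x < ENNReal.ofReal ε} := by
    simp only [hδ]; exact hκ1
  have hκfin' : ∀ i, m {x | δ i x < ENNReal.ofReal ε} < ⊤ := by
    simp only [hδ]; exact hκfin
  have hδmeas : ∀ i, Measurable (δ i) := by
    simp only [hδ]; exact fun i => (lsc_inf_compact d hlsc (hKcpt i)).measurable
  have hAmeas : ∀ i, MeasurableSet {x | δ i x < ENNReal.ofReal ε} :=
    fun i => measurableSet_lt (hδmeas i) measurable_const
  have hδmono : ∀ i j, i ≤ j → ∀ x, δ j x ≤ δ i x := by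
    simp only [hδ]
    exact fun i j hij x => le_iInf₂ fun y hy => iInf₂_le y (hKmono hij hy)
  have hδtri : ∀ i x y, δ i x ≤ δ i y + d x y := by
    simp only [hδ]
    exact fun i x y => ((inf_triangle d htri (K i) x y).trans_eq (add_comm _ _)).trans_eq
      (by rw [hsymm])
  have hk1 : ∀ i, (1 : ℝ) ≤ (m {x | δ i x < ENNReal.ofReal ε}).toReal := fun i => by
    simpa using ENNReal.toReal_mono (hκfin' i).ne (hκ1' i)
  have hsk1 : ∀ i, (1 : ℝ) ≤ Real.sqrt (m {x | δ i x < ENNReal.ofReal ε}).toReal :=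
    fun i => Real.one_le_sqrt.mpr (hk1 i)
  have hkmono : ∀ i j, i ≤ j → (m {x | δ i x < ENNReal.ofReal ε}).toReal ≤
      (m {x | δ j x < ENNReal.ofReal ε}).toReal := by
    intro i j hij
    refine ENNReal.toReal_mono (hκfin' j).ne (measure_mono ?_)
    intro x hx
    exact lt_of_le_of_lt (hδmono i j hij x) hx
  have hcpos : ∀ i, 0 < c i := by
    intro i
    rw [hc]
    have := hsk1 i
    apply div_pos (mul_pos (zpow_pos two_pos _) hε0)
    linarith
  have hcle : ∀ i, c i ≤ (2 : ℝ) ^ (-(i : ℤ) - 2) * (ε / 3) := by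
    intro i
    rw [hc]
    have h1 := hsk1 i
    have h2 : (0:ℝ) < 2 ^ (-(i : ℤ) - 2) * ε := mul_pos (zpow_pos two_pos _) hε0
    rw [show (2:ℝ) ^ (-(i : ℤ) - 2) * (ε / 3) = 2 ^ (-(i : ℤ) - 2) * ε / 3 by ring]
    apply div_le_div_of_nonneg_left h2.le (by norm_num)
    linarith
  have hsumbound : Summable fun i : ℕ => (2 : ℝ) ^ (-(i : ℤ) - 2) * (ε / 3) :=
    summable_two_zpow.mul_right _
  have hcsummable : Summable c :=
    Summable.of_nonneg_of_le (fun i => (hcpos i).le) hcle hsumbound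
  have htsum_c : ∑' i, c i ≤ ε / 6 := by
    calc ∑' i, c i ≤ ∑' i : ℕ, (2 : ℝ) ^ (-(i : ℤ) - 2) * (ε / 3) :=
          Summable.tsum_le_tsum hcle hcsummable hsumbound
      _ = (1 / 2) * (ε / 3) := by rw [tsum_mul_right, tsum_two_zpow]
      _ = ε / 6 := by ring
  have hg01 : ∀ i x, g i x ∈ Set.Icc (0 : ℝ) 1 := by
    simp only [hg]; exact fun i x => cutoffD_mem_Icc ε (δ i x)
  have hgmeas : ∀ i, Measurable (g i) := by
    simp only [hg]; exact fun i => (cutoffD_measurable ε).comp (hδmeas i)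
  have hterm_nonneg : ∀ i (x : X), 0 ≤ c i * g i x :=
    fun i x => mul_nonneg (hcpos i).le (hg01 i x).1
  have hterm_le : ∀ i (x : X), c i * g i x ≤ c i :=
    fun i x => mul_le_of_le_one_right (hcpos i).le (hg01 i x).2
  have hsummable : ∀ x, Summable fun i => c i * g i x :=
    fun x => Summable.of_nonneg_of_le (fun i => hterm_nonneg i x)
      (fun i => hterm_le i x) hcsummable
  have hφnonneg : ∀ x, 0 ≤ φ x := by
    intro x; rw [hφ]; exact tsum_nonneg fun i => hterm_nonneg i x
  have hφle : ∀ x, φ x ≤ 1 := by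
    intro x
    rw [hφ]
    have h1 : ∑' i, c i * g i x ≤ ∑' i, c i :=
      Summable.tsum_le_tsum (fun i => hterm_le i x) (hsummable x) hcsummable
    linarith [htsum_c]
  have hofReal : ∀ x, ENNReal.ofReal (φ x) = ∑' i, a i x := by
    intro x
    rw [hφ, ha]
    exact ENNReal.ofReal_tsum_of_nonneg (fun i => hterm_nonneg i x) (hsummable x)
  have hφeq : φ = fun x => (∑' i, a i x).toReal := by
    funext x
    rw [← hofReal x, ENNReal.toReal_ofReal (hφnonneg x)]
  have hameas : ∀ i, Measurable (a i) := by
    simp only [ha]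
    exact fun i => ((hgmeas i).const_mul (c i)).ennreal_ofReal
  have hφmeas : Measurable φ := by
    rw [hφeq]
    exact (Measurable.ennreal_tsum hameas).ennreal_toReal
  -- Lipschitz property
  have hlip : ∀ x y : X, d x y < ⊤ → |φ x - φ y| ≤ (d x y).toReal := by
    intro x y hdxy
    set Dr := (d x y).toReal with hDr
    have hDr0 : 0 ≤ Dr := ENNReal.toReal_nonneg
    have hgl : ∀ i, |g i x - g i y| ≤ 3 / (2 * ε) * Dr := by
      intro i
      have h1 : δ i y ≤ δ i x + d x y := by
        have h := hδtri i y x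
        rwa [hsymm y x] at h
      simp only [hg]
      exact cutoffD_lipschitz hε0 hdxy.ne (hδtri i x y) h1
    have hterm : ∀ i, |c i * g i x - c i * g i y| ≤ c i * (3 / (2 * ε) * Dr) := by
      intro i
      rw [← mul_sub, abs_mul, abs_of_nonneg (hcpos i).le]
      exact mul_le_mul_of_nonneg_left (hgl i) (hcpos i).le
    have hBsum : Summable fun i => c i * (3 / (2 * ε) * Dr) := hcsummable.mul_right _
    have habs : Summable fun i => |c i * g i x - c i * g i y| :=
      Summable.of_nonneg_of_le (fun i => abs_nonneg _) hterm hBsum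
    have habs' : Summable fun i => ‖c i * g i x - c i * g i y‖ := habs
    have h2 : ‖∑' i, (c i * g i x - c i * g i y)‖ ≤ ∑' i, ‖c i * g i x - c i * g i y‖ :=
      norm_tsum_le_tsum_norm habs'
    rw [Real.norm_eq_abs] at h2
    have key : |φ x - φ y| ≤ (∑' i, c i) * (3 / (2 * ε) * Dr) := by
      rw [hφ]
      calc |(∑' i, c i * g i x) - ∑' i, c i * g i y|
          = |∑' i, (c i * g i x - c i * g i y)| := by
            rw [Summable.tsum_sub (hsummable x) (hsummable y)]
        _ ≤ ∑' i, ‖c i * g i x - c i * g i y‖ := h2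
        _ ≤ ∑' i, c i * (3 / (2 * ε) * Dr) := Summable.tsum_le_tsum hterm habs hBsum
        _ = (∑' i, c i) * (3 / (2 * ε) * Dr) := tsum_mul_right
    have h1 : (∑' i, c i) * (3 / (2 * ε)) ≤ 1 := by
      have h2 : (∑' i, c i) * (3 / (2 * ε)) ≤ (ε / 6) * (3 / (2 * ε)) :=
        mul_le_mul_of_nonneg_right htsum_c (by positivity)
      have h3 : (ε / 6) * (3 / (2 * ε)) = 1 / 4 := by field_simp; ring
      linarith
    calc |φ x - φ y| ≤ (∑' i, c i) * (3 / (2 * ε) * Dr) := key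
      _ = ((∑' i, c i) * (3 / (2 * ε))) * Dr := by ring
      _ ≤ 1 * Dr := mul_le_mul_of_nonneg_right h1 hDr0
      _ = Dr := one_mul _
  -- integral bound
  have hsq : ∀ x, ENNReal.ofReal (φ x ^ 2) = ∑' i, ∑' j, a i x * a j x := by
    intro x
    calc ENNReal.ofReal (φ x ^ 2) = (∑' i, a i x) * (∑' j, a j x) := by
          rw [pow_two, ENNReal.ofReal_mul (hφnonneg x), hofReal x]
      _ = ∑' i, ∑' j, a i x * a j x := by
          rw [← ENNReal.tsum_mul_right]
          exact tsum_congr fun i => ENNReal.tsum_mul_left.symm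
  have hint : (∫⁻ x, ENNReal.ofReal (φ x ^ 2) ∂m) = ∑' i, ∑' j, ∫⁻ x, a i x * a j x ∂m := by
    rw [lintegral_congr hsq,
      lintegral_tsum fun i =>
        (Measurable.ennreal_tsum (f := fun j x => a i x * a j x) fun j => (hameas i).mul (hameas j)).aemeasurable]
    exact tsum_congr fun i => lintegral_tsum fun j => ((hameas i).mul (hameas j)).aemeasurable
  have hterm_int : ∀ i j : ℕ, (∫⁻ x, a i x * a j x ∂m) ≤
      ENNReal.ofReal ((2:ℝ) ^ (-(i : ℤ) - 2) * ((2:ℝ) ^ (-(j : ℤ) - 2) * (1 / 9))) := by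
    intro i j
    set n := min i j with hn
    set A := {x | δ n x < ENNReal.ofReal ε} with hA
    have hpt : ∀ x, a i x * a j x ≤
        A.indicator (fun _ => ENNReal.ofReal (c i) * ENNReal.ofReal (c j)) x := by
      intro x
      by_cases hx : x ∈ A
      · rw [Set.indicator_of_mem hx]
        exact mul_le_mul' (ENNReal.ofReal_le_ofReal (hterm_le i x))
          (ENNReal.ofReal_le_ofReal (hterm_le j x))
      · rw [Set.indicator_of_notMem hx]
        have hge : ENNReal.ofReal ε ≤ δ n x := not_lt.1 hx
        rcases min_choice i j with hmin | hmin
        · have h0 : g i x = 0 := by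
            simp only [hg]
            exact cutoffD_eq_zero hε0 (by rw [hn, hmin] at hge; exact hge)
          simp [ha, h0]
        · have h0 : g j x = 0 := by
            simp only [hg]
            exact cutoffD_eq_zero hε0 (by rw [hn, hmin] at hge; exact hge)
          simp [ha, h0]
    have hreal : c i * c j * (m A).toReal ≤
        (2:ℝ) ^ (-(i : ℤ) - 2) * ((2:ℝ) ^ (-(j : ℤ) - 2) * (1 / 9)) := by
      have hsn : Real.sqrt (m A).toReal * Real.sqrt (m A).toReal = (m A).toReal :=
        Real.mul_self_sqrt ENNReal.toReal_nonneg
      have hsni : Real.sqrt (m A).toReal ≤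
          Real.sqrt (m {x | δ i x < ENNReal.ofReal ε}).toReal :=
        Real.sqrt_le_sqrt (hkmono n i (min_le_left i j))
      have hsnj : Real.sqrt (m A).toReal ≤
          Real.sqrt (m {x | δ j x < ENNReal.ofReal ε}).toReal :=
        Real.sqrt_le_sqrt (hkmono n j (min_le_right i j))
      have hsn1 : (1:ℝ) ≤ Real.sqrt (m A).toReal := hsk1 n
      set Ai := (2:ℝ) ^ (-(i : ℤ) - 2) with hAi
      set Aj := (2:ℝ) ^ (-(j : ℤ) - 2) with hAj
      set si := Real.sqrt (m {x | δ i x < ENNReal.ofReal ε}).toReal with hsi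
      set sj := Real.sqrt (m {x | δ j x < ENNReal.ofReal ε}).toReal with hsj
      set s := Real.sqrt (m A).toReal with hs
      have hAi0 : (0:ℝ) < Ai := zpow_pos two_pos _
      have hAj0 : (0:ℝ) < Aj := zpow_pos two_pos _
      have hsi0 : (0:ℝ) < si := lt_of_lt_of_le (lt_of_lt_of_le one_pos hsn1) hsni
      have hsj0 : (0:ℝ) < sj := lt_of_lt_of_le (lt_of_lt_of_le one_pos hsn1) hsnj
      rw [hc, ← hsn]
      show Ai * ε / (3 * si) * (Aj * ε / (3 * sj)) * (s * s) ≤ Ai * (Aj * (1 / 9))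
      rw [div_mul_div_comm, div_mul_eq_mul_div, div_le_iff₀ (by positivity)]
      have inner : (ε * ε) * (s * s) ≤ si * sj := by
        have h1 : ε * ε ≤ 1 := by nlinarith
        have h2 : s * s ≤ si * sj :=
          mul_le_mul hsni hsnj (by linarith) (by linarith)
        calc (ε * ε) * (s * s) ≤ 1 * (s * s) :=
              mul_le_mul_of_nonneg_right h1 (mul_self_nonneg s)
          _ = s * s := one_mul _
          _ ≤ si * sj := h2
      have t1 : (Ai * Aj) * ((ε * ε) * (s * s)) ≤ (Ai * Aj) * (si * sj) :=
        mul_le_mul_of_nonneg_left inner (mul_pos hAi0 hAj0).le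
      have e1 : Ai * ε * (Aj * ε) * (s * s) = (Ai * Aj) * ((ε * ε) * (s * s)) := by ring
      have e2 : Ai * (Aj * (1 / 9)) * (3 * si * (3 * sj)) = (Ai * Aj) * (si * sj) := by ring
      linarith [t1]
    calc (∫⁻ x, a i x * a j x ∂m)
        ≤ ∫⁻ x, A.indicator (fun _ => ENNReal.ofReal (c i) * ENNReal.ofReal (c j)) x ∂m :=
          lintegral_mono hpt
      _ = ENNReal.ofReal (c i) * ENNReal.ofReal (c j) * m A := by
          rw [lintegral_indicator_const (hAmeas n)]
      _ = ENNReal.ofReal (c i * c j * (m A).toReal) := by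
          rw [hA, ENNReal.ofReal_mul (mul_nonneg (hcpos i).le (hcpos j).le),
            ENNReal.ofReal_mul (hcpos i).le, ENNReal.ofReal_toReal (hκfin' n).ne]
      _ ≤ _ := ENNReal.ofReal_le_ofReal hreal
  have hintle : (∫⁻ x, ENNReal.ofReal (φ x ^ 2) ∂m) ≤ 1 := by
    rw [hint]
    have hsumj : ∀ i : ℕ,
        (∑' j : ℕ, ENNReal.ofReal ((2:ℝ) ^ (-(i : ℤ) - 2) * ((2:ℝ) ^ (-(j : ℤ) - 2) * (1 / 9))))
          = ENNReal.ofReal ((2:ℝ) ^ (-(i : ℤ) - 2) * (1 / 18)) := by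
      intro i
      rw [← ENNReal.ofReal_tsum_of_nonneg
        (fun j => by positivity)
        (Summable.mul_left _ (summable_two_zpow.mul_right (1 / 9)))]
      congr 1
      rw [tsum_mul_left, tsum_mul_right, tsum_two_zpow]
      ring
    calc (∑' i, ∑' j, ∫⁻ x, a i x * a j x ∂m)
        ≤ ∑' i : ℕ, ∑' j : ℕ,
            ENNReal.ofReal ((2:ℝ) ^ (-(i : ℤ) - 2) * ((2:ℝ) ^ (-(j : ℤ) - 2) * (1 / 9))) :=
          ENNReal.tsum_le_tsum fun i => ENNReal.tsum_le_tsum fun j => hterm_int i j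
      _ = ∑' i : ℕ, ENNReal.ofReal ((2:ℝ) ^ (-(i : ℤ) - 2) * (1 / 18)) :=
          tsum_congr hsumj
      _ = ENNReal.ofReal ((1 / 2) * (1 / 18)) := by
          rw [← ENNReal.ofReal_tsum_of_nonneg (fun i => by positivity)
            (summable_two_zpow.mul_right _), tsum_mul_right, tsum_two_zpow]
      _ ≤ 1 := by
          rw [show ((1:ℝ) / 2) * (1 / 18) = 1 / 36 by norm_num]
          exact ENNReal.ofReal_le_one.mpr (by norm_num)
  -- lower bound
  have hφlow : ∀ i x, δ i x < ENNReal.ofReal (ε / 3) → c i ≤ φ x := by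
    intro i x hx
    have hgi : g i x = 1 := by
      simp only [hg]
      exact cutoffD_eq_one hε0 hx
    have h1 : c i * g i x = c i := by rw [hgi, mul_one]
    have h2 : c i * g i x ≤ φ x := by
      rw [hφ]
      exact Summable.le_tsum (hsummable x) i fun j _ => hterm_nonneg j x
    linarith
  have hlow : ∀ i : ℕ, 0 < c i ∧
      ∀ x : X, δ i x < ENNReal.ofReal (ε / 3) → c i ≤ φ x :=
    fun i => ⟨hcpos i, fun x hx => hφlow i x hx⟩
  -- a.e. positivity
  have hpos : ∀ x, x ∈ ⋃ i, K i → 0 < φ x := by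
    intro x hx
    obtain ⟨_, ⟨i, rfl⟩, hxi⟩ := hx
    have hδ0 : δ i x = 0 := by
      refine le_antisymm ?_ zero_le
      simp only [hδ]
      exact (iInf₂_le x hxi).trans_eq (hrefl x)
    have : δ i x < ENNReal.ofReal (ε / 3) := by
      rw [hδ0]
      exact ENNReal.ofReal_pos.mpr (by positivity)
    exact lt_of_lt_of_le (hcpos i) (hφlow i x this)
  have hae : ∀ᵐ x ∂m, 0 < φ x := by
    rw [ae_iff]
    refine measure_mono_null ?_ hKcover
    intro x hx
    exact fun hmem => hx (hpos x hmem)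
  refine ⟨φ, hφmeas, fun x => ⟨hφnonneg x, hφle x⟩, hintle, hlip, ?_, hae⟩
  simpa only [hc, hδ] using hlow
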